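/- Let V be a vector space of dimension at least 2 over a finite field F with |F| = q. Then V can be covered by q + 1 proper subspaces, but cannot be covered by q proper subspaces. -/

import Mathlib

open Module

theorem vector_space_cover_number
    {F V : Type*} [Field F] [Fintype F] [AddCommGroup V] [Module F V]
    (hdim : 2 ≤ Module.rank F V) :
    (∃ W : Fin (Fintype.card F + 1) → Submodule F V,
      (∀ i, W i ≠ ⊤) ∧ (⋃ i, (W i : Set V)) = Set.univ) ∧
    ¬ ∃ W : Fin (Fintype.card F) → Submodule F V,
      (∀ i, W i ≠ ⊤) ∧ (⋃ i, (W i : Set V)) = Set.univ := by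
  classical
  have hq : 2 ≤ Fintype.card F := Fintype.one_lt_card
  constructor
  · -- existence of a cover by q+1 proper subspaces
    have hdim' : ((2 : ℕ) : Cardinal) ≤ Module.rank F V := by
      simpa using hdim
    obtain ⟨s, hs2, hli⟩ := le_rank_iff_exists_linearIndependent_finset.mp hdim'
    obtain ⟨a, b, hab, hsab⟩ := Finset.card_eq_two.mp hs2
    have ha : a ∈ (s : Set V) := by simp [hsab]
    have hb : b ∈ (s : Set V) := by simp [hsab]
    set B := Basis.extend hli with hB
    let ia : LinearIndepOn.extend (id hli : LinearIndepOn F id (s : Set V)) (Set.subset_univ _) := ⟨a, LinearIndepOn.subset_extend (id hli : LinearIndepOn F id (s : Set V)) _ ha⟩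
    let ib : LinearIndepOn.extend (id hli : LinearIndepOn F id (s : Set V)) (Set.subset_univ _) := ⟨b, LinearIndepOn.subset_extend (id hli : LinearIndepOn F id (s : Set V)) _ hb⟩
    have hiab : ia ≠ ib := by
      intro h
      exact hab (congrArg Subtype.val h)
    have hBa : B ia = a := Basis.extend_apply_self hli ia
    have hBb : B ib = b := Basis.extend_apply_self hli ib
    let ca : V →ₗ[F] F := B.coord ia
    let cb : V →ₗ[F] F := B.coord ib
    have hcaa : ca a = 1 := by
      simp [ca, ← hBa, Basis.coord_apply, Basis.repr_self]
    have hcba : cb a = 0 := by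
      simp [cb, ← hBa, Basis.coord_apply, Basis.repr_self,
        Finsupp.single_apply_eq_zero, hiab.symm]
    have hcbb : cb b = 1 := by
      simp [cb, ← hBb, Basis.coord_apply, Basis.repr_self]
    let e : F ≃ Fin (Fintype.card F) := Fintype.equivFin F
    let g : Fin (Fintype.card F + 1) → (V →ₗ[F] F) := fun i =>
      if h : i = Fin.last _ then cb else ca - (e.symm (i.castPred h)) • cb
    refine ⟨fun i => LinearMap.ker (g i), fun i => ?_, ?_⟩
    · intro htop
      have hg0 : g i = 0 := LinearMap.ker_eq_top.mp htop
      by_cases h : i = Fin.last _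
      · have : cb b = 0 := by
          rw [show cb = g i by simp [g, h]]; simp [hg0]
        rw [hcbb] at this; exact one_ne_zero this
      · have : (ca - (e.symm (i.castPred h)) • cb) a = 0 := by
          rw [show (ca - (e.symm (i.castPred h)) • cb) = g i by simp [g, h]]
          simp [hg0]
        simp [hcaa, hcba] at this
    · ext v
      simp only [Set.mem_iUnion, Set.mem_univ, iff_true, SetLike.mem_coe,
        LinearMap.mem_ker]
      by_cases hv : cb v = 0
      · exact ⟨Fin.last _, by simp [g, hv]⟩
      · refine ⟨(e (ca v / cb v)).castSucc, ?_⟩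
        have hne : (e (ca v / cb v)).castSucc ≠ Fin.last _ :=
          Fin.ne_of_lt (Fin.castSucc_lt_last _)
        simp only [g, dif_neg hne, Fin.castPred_castSucc, Equiv.symm_apply_apply,
          LinearMap.sub_apply, LinearMap.smul_apply, smul_eq_mul]
        field_simp
        simp
  · -- impossibility of a cover by q proper subspaces
    rintro ⟨W, hW, hcov⟩
    have hx : ∀ i, ∃ v, v ∉ W i := by
      intro i
      by_contra h
      push_neg at h
      exact hW i (Submodule.eq_top_iff'.mpr h)
    choose x hxW using hx
    set U : Submodule F V := Submodule.span F (Set.range x) with hU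
    haveI : FiniteDimensional F U := FiniteDimensional.span_of_finite F (Set.finite_range x)
    haveI : Finite U := Module.finite_of_finite F
    haveI : Fintype U := Fintype.ofFinite _
    let p : Fin (Fintype.card F) → Submodule F U := fun i => (W i).comap U.subtype
    have hxU : ∀ i, x i ∈ U := fun i => Submodule.subset_span (Set.mem_range_self i)
    have hxp : ∀ i, (⟨x i, hxU i⟩ : U) ∉ p i := fun i => hxW i
    have hptop : ∀ i, p i ≠ ⊤ := by
      intro i h
      exact hxp i (h ▸ Submodule.mem_top)
    have hcov' : ∀ u : U, ∃ i, u ∈ p i := by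
      intro u
      have : (u : V) ∈ ⋃ i, (W i : Set V) := hcov ▸ Set.mem_univ _
      obtain ⟨i, hi⟩ := Set.mem_iUnion.mp this
      exact ⟨i, hi⟩
    set d := finrank F U with hd
    have hd1 : 1 ≤ d := by
      have h0 : (0 : Fin (Fintype.card F)) = 0 := rfl
      have hx0 : x ⟨0, by omega⟩ ≠ 0 := by
        intro h
        exact hxW ⟨0, by omega⟩ (h ▸ (W _).zero_mem)
      haveI : Nontrivial U :=
        nontrivial_of_ne ⟨x ⟨0, by omega⟩, hxU _⟩ 0 (by
          intro h
          exact hx0 (congrArg Subtype.val h))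
      exact finrank_pos
    -- counting
    have hcardU : Fintype.card U = (Fintype.card F) ^ d := card_eq_pow_finrank
    have hcardp : ∀ i, Fintype.card (p i) ≤ (Fintype.card F) ^ (d - 1) := by
      intro i
      have hlt : finrank F (p i) < d := Submodule.finrank_lt (hptop i)
      have : Fintype.card (p i) = (Fintype.card F) ^ finrank F (p i) := card_eq_pow_finrank
      rw [this]
      exact Nat.pow_le_pow_right (by omega) (by omega)
    let t : Fin (Fintype.card F) → Finset U := fun i => ((p i : Set U).toFinset).erase 0
    have hsub : Finset.univ.erase (0 : U) ⊆ Finset.univ.biUnion t := by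
      intro u hu
      have hu0 : u ≠ 0 := (Finset.mem_erase.mp hu).1
      obtain ⟨i, hi⟩ := hcov' u
      exact Finset.mem_biUnion.mpr ⟨i, Finset.mem_univ _,
        Finset.mem_erase.mpr ⟨hu0, Set.mem_toFinset.mpr hi⟩⟩
    have hle : (Fintype.card F) ^ d - 1 ≤ (Fintype.card F) * ((Fintype.card F) ^ (d - 1) - 1) := by
      have h1 : (Finset.univ.erase (0 : U)).card = (Fintype.card F) ^ d - 1 := by
        rw [Finset.card_erase_of_mem (Finset.mem_univ _), Finset.card_univ, hcardU]
      have h2 : (Finset.univ.biUnion t).card ≤ ∑ _i : Fin (Fintype.card F), ((Fintype.card F) ^ (d - 1) - 1) := by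
        refine le_trans (Finset.card_biUnion_le) (Finset.sum_le_sum ?_)
        intro i _
        have : (t i).card = Fintype.card (p i) - 1 := by
          rw [Finset.card_erase_of_mem (Set.mem_toFinset.mpr (p i).zero_mem),
            Set.toFinset_card]
          rfl
        rw [this]
        exact Nat.sub_le_sub_right (hcardp i) 1
      have h3 : ∑ _i : Fin (Fintype.card F), ((Fintype.card F) ^ (d - 1) - 1) = (Fintype.card F) * ((Fintype.card F) ^ (d - 1) - 1) := by
        rw [Finset.sum_const, Finset.card_univ, Fintype.card_fin, smul_eq_mul]
      calc (Fintype.card F) ^ d - 1 = (Finset.univ.erase (0 : U)).card := h1.symm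
        _ ≤ (Finset.univ.biUnion t).card := Finset.card_le_card hsub
        _ ≤ _ := h2
        _ = _ := h3
    have hpow : (Fintype.card F) ^ d = (Fintype.card F) * (Fintype.card F) ^ (d - 1) := by
      conv_lhs => rw [show d = (d - 1) + 1 by omega]
      rw [pow_succ]
      ring
    have hqd : 1 ≤ (Fintype.card F) ^ (d - 1) := Nat.one_le_pow _ _ (by omega)
    have hmul : (Fintype.card F) * ((Fintype.card F) ^ (d - 1) - 1) = (Fintype.card F) ^ d - (Fintype.card F) := by
      rw [Nat.mul_sub, mul_one, ← hpow]
    have hqle : (Fintype.card F) ≤ (Fintype.card F) ^ d := by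
      rw [hpow]
      exact Nat.le_mul_of_pos_right (Fintype.card F) (by omega)
    omega
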